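/- arXiv:1008.3743 — 5 statements merged into one kernel-verified Lean document; each statement's English description precedes it below -/
import Mathlib

section
/- Let (α, ≤) be a lattice (with binary meet ⊓) and let D1, D2 ⊆ α be finite sets. Then reduce({t1 ⊓ t2 | t1 ∈ D1, t2 ∈ D2}) is a greatest lower bound of D1 and D2 with respect to the Hoare order ⊑: it is Hoare-dominated by both D1 and D2, and every set D' ⊆ α with D' ⊑ D1 and D' ⊑ D2 satisfies D' ⊑ reduce({t1 ⊓ t2 | t1 ∈ D1, t2 ∈ D2}). -/
/-- The Hoare order between sets. -/
def hoare {α : Type*} [Preorder α] (D1 D2 : Set α) : Prop :=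
  ∀ t1 ∈ D1, ∃ t2 ∈ D2, t1 ≤ t2

/-- The reduced version of a set: its maximal elements. -/
def reduce {α : Type*} [Preorder α] (D : Set α) : Set α :=
  {t ∈ D | ∀ t' ∈ D, t ≤ t' → t = t'}

lemma exists_reduce_le {α : Type*} [PartialOrder α] {S : Set α} (hS : S.Finite)
    {a : α} (ha : a ∈ S) : ∃ b ∈ reduce S, a ≤ b := by
  obtain ⟨b, hb, hmax⟩ := Set.Finite.exists_maximalFor id {x ∈ S | a ≤ x}
    (hS.subset (fun x hx => hx.1)) ⟨a, ha, le_refl a⟩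
  exact ⟨b, ⟨hb.1, fun x hx hbx => le_antisymm hbx (hmax ⟨hx, hb.2.trans hbx⟩ hbx)⟩, hb.2⟩

/-- For finite `D1, D2` in a lattice, the set
`reduce {t1 ⊓ t2 | t1 ∈ D1, t2 ∈ D2}` is a greatest lower bound of `D1` and
`D2` w.r.t. the Hoare order. -/
theorem reduce_meets_is_glb {α : Type*} [Lattice α]
    (D1 D2 : Set α) (h1 : D1.Finite) (h2 : D2.Finite) :
    hoare (reduce {t : α | ∃ t1 ∈ D1, ∃ t2 ∈ D2, t = t1 ⊓ t2}) D1 ∧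
    hoare (reduce {t : α | ∃ t1 ∈ D1, ∃ t2 ∈ D2, t = t1 ⊓ t2}) D2 ∧
    ∀ D' : Set α, hoare D' D1 → hoare D' D2 →
      hoare D' (reduce {t : α | ∃ t1 ∈ D1, ∃ t2 ∈ D2, t = t1 ⊓ t2}) := by
  have hSfin : ({t : α | ∃ t1 ∈ D1, ∃ t2 ∈ D2, t = t1 ⊓ t2}).Finite := by
    have : {t : α | ∃ t1 ∈ D1, ∃ t2 ∈ D2, t = t1 ⊓ t2} ⊆
        (fun p : α × α => p.1 ⊓ p.2) '' (D1 ×ˢ D2) := by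
      rintro t ⟨t1, ht1, t2, ht2, rfl⟩
      exact ⟨(t1, t2), ⟨ht1, ht2⟩, rfl⟩
    exact ((h1.prod h2).image _).subset this
  refine ⟨?_, ?_, ?_⟩
  · rintro t ⟨⟨t1, ht1, t2, ht2, rfl⟩, -⟩
    exact ⟨t1, ht1, inf_le_left⟩
  · rintro t ⟨⟨t1, ht1, t2, ht2, rfl⟩, -⟩
    exact ⟨t2, ht2, inf_le_right⟩
  · intro D' hD1 hD2 t ht
    obtain ⟨t1, ht1, hle1⟩ := hD1 t ht
    obtain ⟨t2, ht2, hle2⟩ := hD2 t ht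
    obtain ⟨b, hb, hle⟩ := exists_reduce_le hSfin ⟨t1, ht1, t2, ht2, rfl⟩
    exact ⟨b, hb, (le_inf hle1 hle2).trans hle⟩
end

section
/- Let (α, ≤) be a lattice. The collection of finite reduced subsets of α, ordered by the Hoare order ⊑, forms a lattice: ⊑ is a partial order on finite reduced subsets, and every pair D1, D2 of finite reduced subsets has a least upper bound (namely reduce(D1 ∪ D2)) and a greatest lower bound (namely reduce({t1 ⊓ t2 | t1 ∈ D1, t2 ∈ D2})) among finite reduced subsets. -/
/-- A set is reduced if no two distinct elements are comparable. -/
def reducedSet {α : Type*} [Preorder α] (D : Set α) : Prop :=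
  ∀ t1 ∈ D, ∀ t2 ∈ D, t1 ≤ t2 → t1 = t2

/-- A finite reduced subset of `α`. -/
def finRed {α : Type*} [Preorder α] (D : Set α) : Prop :=
  D.Finite ∧ reducedSet D

lemma hoare_reduce {α : Type*} [PartialOrder α] {D : Set α} (hD : D.Finite) :
    hoare D (reduce D) := by
  intro t ht
  have hfin : {x ∈ D | t ≤ x}.Finite := hD.subset (fun x hx => hx.1)
  obtain ⟨m, hm, hmax⟩ := hfin.exists_maximalFor id _ ⟨t, ht, le_refl t⟩
  refine ⟨m, ⟨hm.1, fun t' ht' hle => ?_⟩, hm.2⟩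
  exact le_antisymm hle (hmax ⟨ht', hm.2.trans hle⟩ hle)

lemma reducedSet_reduce {α : Type*} [PartialOrder α] (D : Set α) :
    reducedSet (reduce D) :=
  fun t1 h1 t2 h2 hle => h1.2 t2 h2.1 hle

/-- The finite reduced subsets of a lattice, ordered by the Hoare order,
form a lattice: the Hoare order is a partial order on them, and every pair
has a least upper bound `reduce (D1 ∪ D2)` and a greatest lower bound
`reduce {t1 ⊓ t2 | t1 ∈ D1, t2 ∈ D2}`, both of which are again finite
reduced subsets. -/
theorem finite_reduced_sets_form_lattice {α : Type*} [Lattice α] :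
    (∀ D : Set α, finRed D → hoare D D) ∧
    (∀ D1 D2 D3 : Set α, finRed D1 → finRed D2 → finRed D3 →
      hoare D1 D2 → hoare D2 D3 → hoare D1 D3) ∧
    (∀ D1 D2 : Set α, finRed D1 → finRed D2 →
      hoare D1 D2 → hoare D2 D1 → D1 = D2) ∧
    (∀ D1 D2 : Set α, finRed D1 → finRed D2 →
      finRed (reduce (D1 ∪ D2)) ∧
      hoare D1 (reduce (D1 ∪ D2)) ∧
      hoare D2 (reduce (D1 ∪ D2)) ∧
      (∀ D' : Set α, finRed D' → hoare D1 D' → hoare D2 D' →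
        hoare (reduce (D1 ∪ D2)) D')) ∧
    (∀ D1 D2 : Set α, finRed D1 → finRed D2 →
      finRed (reduce {t : α | ∃ t1 ∈ D1, ∃ t2 ∈ D2, t = t1 ⊓ t2}) ∧
      hoare (reduce {t : α | ∃ t1 ∈ D1, ∃ t2 ∈ D2, t = t1 ⊓ t2}) D1 ∧
      hoare (reduce {t : α | ∃ t1 ∈ D1, ∃ t2 ∈ D2, t = t1 ⊓ t2}) D2 ∧
      (∀ D' : Set α, finRed D' → hoare D' D1 → hoare D' D2 →
        hoare D' (reduce {t : α | ∃ t1 ∈ D1, ∃ t2 ∈ D2, t = t1 ⊓ t2}))) := by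
  refine ⟨?_, ?_, ?_, ?_, ?_⟩
  · intro D _ t ht; exact ⟨t, ht, le_refl t⟩
  · intro D1 D2 D3 _ _ _ h12 h23 t ht
    obtain ⟨t2, ht2, h1⟩ := h12 t ht
    obtain ⟨t3, ht3, h2⟩ := h23 t2 ht2
    exact ⟨t3, ht3, h1.trans h2⟩
  · intro D1 D2 h1 h2 h12 h21
    have key : ∀ (A B : Set α), reducedSet A → reducedSet B →
        hoare A B → hoare B A → A ⊆ B := by
      intro A B hA hB hAB hBA t ht
      obtain ⟨t2, ht2, hle⟩ := hAB t ht
      obtain ⟨t1, ht1, hle'⟩ := hBA t2 ht2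
      have := hA t ht t1 ht1 (hle.trans hle')
      subst this
      have : t = t2 := le_antisymm hle hle'
      rwa [this]
    exact Set.Subset.antisymm (key D1 D2 h1.2 h2.2 h12 h21)
      (key D2 D1 h2.2 h1.2 h21 h12)
  · intro D1 D2 h1 h2
    have hUfin : (D1 ∪ D2).Finite := h1.1.union h2.1
    have hred : hoare (D1 ∪ D2) (reduce (D1 ∪ D2)) := hoare_reduce hUfin
    refine ⟨⟨hUfin.subset (fun x hx => hx.1), reducedSet_reduce _⟩, ?_, ?_, ?_⟩
    · intro t ht; exact hred t (Or.inl ht)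
    · intro t ht; exact hred t (Or.inr ht)
    · intro D' _ hd1 hd2 t ht
      rcases ht.1 with h | h
      · exact hd1 t h
      · exact hd2 t h
  · intro D1 D2 h1 h2
    set S : Set α := {t : α | ∃ t1 ∈ D1, ∃ t2 ∈ D2, t = t1 ⊓ t2} with hS
    have hSfin : S.Finite := by
      have : S ⊆ Set.image2 (· ⊓ ·) D1 D2 := by
        rintro t ⟨t1, ht1, t2, ht2, rfl⟩
        exact ⟨t1, ht1, t2, ht2, rfl⟩
      exact (Set.Finite.image2 _ h1.1 h2.1).subset this
    have hred : hoare S (reduce S) := hoare_reduce hSfin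
    refine ⟨⟨hSfin.subset (fun x hx => hx.1), reducedSet_reduce _⟩, ?_, ?_, ?_⟩
    · rintro t ⟨⟨t1, ht1, t2, ht2, rfl⟩, -⟩
      exact ⟨t1, ht1, inf_le_left⟩
    · rintro t ⟨⟨t1, ht1, t2, ht2, rfl⟩, -⟩
      exact ⟨t2, ht2, inf_le_right⟩
    · intro D' _ hd1 hd2 t ht
      obtain ⟨t1, ht1, hle1⟩ := hd1 t ht
      obtain ⟨t2, ht2, hle2⟩ := hd2 t ht
      obtain ⟨m, hm, hle⟩ := hred (t1 ⊓ t2) ⟨t1, ht1, t2, ht2, rfl⟩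
      exact ⟨m, hm, (le_inf hle1 hle2).trans hle⟩
end

section
/- Let A be a set of attributes, (L, ⪯) a partial order, and order tuples t : A → L pointwise. Fix an attribute A0 ∈ A and a value a ∈ L. Then the selection operator σ_{a⪯A0}(D) = {t ∈ D | a ⪯ t(A0)} is ⊑-monotone: for all sets of tuples D, D' with D ⊑ D', it holds that σ_{a⪯A0}(D) ⊑ σ_{a⪯A0}(D'). -/
/-- The selection operator `σ_{a ⪯ A0}` is ⊑-monotone, where tuples over
attributes `ι` with values in the partial order `L` are ordered pointwise. -/
theorem selection_dom_monotone {ι L : Type*} [PartialOrder L]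
    (A0 : ι) (a : L) (D D' : Set (ι → L)) (h : hoare D D') :
    hoare {t ∈ D | a ≤ t A0} {t ∈ D' | a ≤ t A0} := by
  rintro t1 ⟨ht1, ha⟩
  obtain ⟨t2, ht2, hle⟩ := h t1 ht1
  exact ⟨t2, ⟨ht2, ha.trans (hle A0)⟩, hle⟩
end

section
/- Let A be a set of attributes and (L, ⪯) a partial order with least element ⊥, and order tuples t : A → L pointwise. Fix attributes A1, A2 ∈ A. Then the join-selection operator σ_{A1⋈A2}(D) = {t ∈ D | there exists c ∈ L with c ≠ ⊥, c ⪯ t(A1), and c ⪯ t(A2)} is ⊑-monotone: for all sets of tuples D, D' with D ⊑ D', it holds that σ_{A1⋈A2}(D) ⊑ σ_{A1⋈A2}(D'). -/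
/-- The join-selection operator `σ_{A1 ⋈ A2}` is ⊑-monotone, where tuples over
attributes `ι` with values in the partial order `L` (having a least element ⊥)
are ordered pointwise. -/
theorem join_selection_dom_monotone {ι L : Type*} [PartialOrder L] [OrderBot L]
    (A1 A2 : ι) (D D' : Set (ι → L)) (h : hoare D D') :
    hoare {t ∈ D | ∃ c : L, c ≠ ⊥ ∧ c ≤ t A1 ∧ c ≤ t A2}
          {t ∈ D' | ∃ c : L, c ≠ ⊥ ∧ c ≤ t A1 ∧ c ≤ t A2} := by
  rintro t ⟨htD, c, hc0, h1, h2⟩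
  obtain ⟨t', ht'D, hle⟩ := h t htD
  exact ⟨t', ⟨ht'D, c, hc0, h1.trans (hle A1), h2.trans (hle A2)⟩, hle⟩
end

section
/- Let α be a set with a reflexive and symmetric binary relation ≈, let n ≥ 1, and consider records r : Fin n → Set α all of whose components are nonempty. Define the match relation M(r1, r2) iff there exists an index i with simS(r1(i), r2(i)), and the merge μ(r1, r2) as the componentwise union, μ(r1, r2)(i) = r1(i) ∪ r2(i). Then for all records r1, r2 with nonempty components: M(r1, r2) holds and μ(r1, r2) = r2 if and only if r1(i) ⊆ r2(i) for every index i. That is, Swoosh's merge domination coincides with componentwise set inclusion. -/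
/-- The similarity relation induced on sets by a similarity relation on
elements. -/
def simS {α : Type*} (sim : α → α → Prop) (S1 S2 : Set α) : Prop :=
  ∃ a1 ∈ S1, ∃ a2 ∈ S2, sim a1 a2

/-- For records with nonempty components over a reflexive, symmetric
similarity relation, Swoosh's merge domination (`M r1 r2` holds and
`μ(r1,r2) = r2`, with `μ` the componentwise union) coincides with
componentwise set inclusion. -/
theorem merge_domination_iff_componentwise_subset {α : Type*}
    (sim : α → α → Prop)
    (hrefl : ∀ a : α, sim a a)
    (hsymm : ∀ a b : α, sim a b → sim b a)
    (n : ℕ) (hn : 1 ≤ n)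
    (r1 r2 : Fin n → Set α)
    (h1 : ∀ i : Fin n, (r1 i).Nonempty)
    (h2 : ∀ i : Fin n, (r2 i).Nonempty) :
    ((∃ i : Fin n, simS sim (r1 i) (r2 i)) ∧
        (fun i : Fin n => r1 i ∪ r2 i) = r2) ↔
      ∀ i : Fin n, r1 i ⊆ r2 i := by
  constructor
  · rintro ⟨-, h⟩ i
    have := congrFun h i
    rw [← this]
    exact Set.subset_union_left
  · intro h
    constructor
    · have i : Fin n := ⟨0, hn⟩
      obtain ⟨a, ha⟩ := h1 i
      exact ⟨i, a, ha, a, h i ha, hrefl a⟩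
    · funext i
      exact Set.union_eq_right.mpr (h i)
end
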